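/- arXiv:1509.05608 — 2 statements merged into one kernel-verified Lean document; each statement's English description precedes it below -/
import Mathlib

section
/- Let P = Σ_{|α| ≤ d} c_α D^α be a constant-coefficient partial differential operator on ℝⁿ, where D^α = (-i)^{|α|} ∂^α and c_α ∈ ℂ, with symbol p(ξ) = Σ_{|α| ≤ d} c_α ξ^α. Assume there is R > 0 with p(ξ) ≠ 0 for all |ξ| ≥ R, and assume there exist C > 0 and N ∈ ℕ with |1/p(ξ)| ≤ C (1+|ξ|)^N for |ξ| ≥ R. Let χ : ℝⁿ → ℝ be a smooth function with χ(ξ) = 0 for |ξ| ≤ R and χ(ξ) = 1 for |ξ| ≥ R + 1. For a Schwartz function f define (Qf)(x) = (2π)^{-n/2} ∫_{ℝⁿ} e^{i ξ·x} (χ(ξ)/p(ξ)) f̂(ξ) dξ, where f̂(ξ) = (2π)^{-n/2} ∫ e^{-i ξ·y} f(y) dy. Then Qf is smooth, and P(Qf)(x) = f(x) + ∫_{ℝⁿ} r(x-y) f(y) dy for all x, where r(z) = (2π)^{-n} ∫_{ℝⁿ} e^{i ξ·z} (χ(ξ) - 1) dξ is a smooth function (the Fourier inverse of the compactly supported smooth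 function χ - 1). -/
open MeasureTheory

/-- The partial derivative `∂/∂x_i` of a function on `ℝⁿ`. -/
noncomputable def pd {n : ℕ} {F : Type*} [NormedAddCommGroup F] [NormedSpace ℝ F]
    (i : Fin n) (f : EuclideanSpace ℝ (Fin n) → F) : EuclideanSpace ℝ (Fin n) → F :=
  fun x => fderiv ℝ f x (EuclideanSpace.single i 1)

/-- The iterated partial derivative `∂^α = (∂/∂x_1)^{α_1} ⋯ (∂/∂x_n)^{α_n}`
associated with a multi-index `α`. -/
noncomputable def mderiv {n : ℕ} {F : Type*} [NormedAddCommGroup F] [NormedSpace ℝ F]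
    (α : Fin n → ℕ) (f : EuclideanSpace ℝ (Fin n) → F) : EuclideanSpace ℝ (Fin n) → F :=
  ((List.finRange n).foldr (fun i g => (pd i)^[α i] ∘ g) id) f

/-- The finite set of multi-indices `α` with `|α| = Σ α_i ≤ d`. -/
def mIdx (n d : ℕ) : Finset (Fin n → ℕ) :=
  (Fintype.piFinset fun _ : Fin n => Finset.range (d + 1)).filter fun α => ∑ i, α i ≤ d

/-- The differential operator `Σ_{|α| ≤ d} a_α(x) D^α`, where `D^α = (-i)^{|α|} ∂^α`. -/
noncomputable def diffOp (n d : ℕ)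
    (a : (Fin n → ℕ) → EuclideanSpace ℝ (Fin n) → ℂ)
    (f : EuclideanSpace ℝ (Fin n) → ℂ) : EuclideanSpace ℝ (Fin n) → ℂ :=
  fun x => ∑ α ∈ mIdx n d, a α x * ((-Complex.I) ^ (∑ i, α i) * mderiv α f x)

/-- The symbol `σ(x,ξ) = Σ_{|α| ≤ d} a_α(x) ξ^α` of the operator `diffOp n d a`. -/
noncomputable def symb (n d : ℕ)
    (a : (Fin n → ℕ) → EuclideanSpace ℝ (Fin n) → ℂ)
    (x ξ : EuclideanSpace ℝ (Fin n)) : ℂ :=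
  ∑ α ∈ mIdx n d, a α x * ∏ i, ((ξ i : ℝ) : ℂ) ^ α i


namespace Stmt3Aux
open MeasureTheory FourierTransform Real Complex RealInnerProductSpace VectorFourier

noncomputable def FI {n : ℕ} (g : EuclideanSpace ℝ (Fin n) → ℂ)
    (x : EuclideanSpace ℝ (Fin n)) : ℂ :=
  ∫ ξ : EuclideanSpace ℝ (Fin n), Complex.exp (Complex.I * ((∑ i, ξ i * x i : ℝ) : ℂ)) * g ξ

def Decay {n : ℕ} (g : EuclideanSpace ℝ (Fin n) → ℂ) : Prop :=
  AEStronglyMeasurable g (volume : Measure (EuclideanSpace ℝ (Fin n))) ∧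
    ∀ M : ℕ, ∃ B : ℝ, ∀ ξ : EuclideanSpace ℝ (Fin n), (1 + ‖ξ‖) ^ M * ‖g ξ‖ ≤ B

variable {n : ℕ}

lemma continuous_coord (i : Fin n) : Continuous fun ξ : EuclideanSpace ℝ (Fin n) => ξ i :=
  (continuous_apply i).comp (PiLp.continuous_ofLp 2 fun _ : Fin n => ℝ)

lemma continuous_sumcoord (x : EuclideanSpace ℝ (Fin n)) :
    Continuous fun ξ : EuclideanSpace ℝ (Fin n) => ∑ i, ξ i * x i :=
  continuous_finset_sum _ fun i _ => (continuous_coord i).mul continuous_const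

lemma norm_cexp_I_mul (r : ℝ) : ‖Complex.exp (Complex.I * (r : ℂ))‖ = 1 := by
  rw [mul_comm]; exact Complex.norm_exp_ofReal_mul_I r

lemma FI_eq (g : EuclideanSpace ℝ (Fin n) → ℂ) (x : EuclideanSpace ℝ (Fin n)) :
    FI g x = 𝓕 g (-(2 * π)⁻¹ • x) := by
  rw [Real.fourier_eq']
  refine integral_congr_ae (Filter.Eventually.of_forall fun v => ?_)
  simp only [smul_eq_mul]
  have h1 : ⟪v, -(2 * π)⁻¹ • x⟫ = -(2*π)⁻¹ * ⟪v, x⟫ := real_inner_smul_right _ _ _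
  have h2 : ⟪v, x⟫ = ∑ i, v i * x i := by simp [PiLp.inner_apply, mul_comm]
  have hπ : (2 * π) ≠ 0 := by positivity
  have : -2 * π * ⟪v, -(2 * π)⁻¹ • x⟫ = ∑ i, v i * x i := by
    rw [h1, h2]; field_simp
  rw [this, mul_comm Complex.I]

lemma Decay.integrable_pow_mul {g : EuclideanSpace ℝ (Fin n) → ℂ} (hg : Decay g)
    (k : ℕ) : Integrable (fun ξ : EuclideanSpace ℝ (Fin n) => ‖ξ‖ ^ k * ‖g ξ‖) := by
  obtain ⟨B, hB⟩ := hg.2 (k + (n + 1))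
  have hint : Integrable (fun ξ : EuclideanSpace ℝ (Fin n) =>
      B * (1 + ‖ξ‖) ^ (-(n + 1 : ℝ))) := by
    refine Integrable.const_mul ?_ B
    exact integrable_one_add_norm (by simp)
  refine hint.mono' ((aestronglyMeasurable_id.norm.pow _).mul hg.1.norm)
    (Filter.Eventually.of_forall fun ξ => ?_)
  have h0 : (0:ℝ) < 1 + ‖ξ‖ := by positivity
  have hP : (0:ℝ) < (1 + ‖ξ‖) ^ (n + 1) := by positivity
  have key : (1 + ‖ξ‖) ^ (n + 1) * (‖ξ‖ ^ k * ‖g ξ‖) ≤ B := by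
    calc (1 + ‖ξ‖) ^ (n + 1) * (‖ξ‖ ^ k * ‖g ξ‖)
        ≤ (1 + ‖ξ‖) ^ (n + 1) * ((1 + ‖ξ‖) ^ k * ‖g ξ‖) := by
          gcongr; · linarith [norm_nonneg ξ]
      _ = (1 + ‖ξ‖) ^ (k + (n + 1)) * ‖g ξ‖ := by ring
      _ ≤ B := hB ξ
  have hrw : (1 + ‖ξ‖) ^ (-(n + 1 : ℝ)) = ((1 + ‖ξ‖) ^ (n + 1 : ℕ))⁻¹ := by
    rw [show (-(n + 1 : ℝ)) = -((n + 1 : ℕ) : ℝ) by push_cast; ring,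
      Real.rpow_neg h0.le, Real.rpow_natCast]
  rw [Real.norm_of_nonneg (by positivity), hrw, ← div_eq_mul_inv, le_div_iff₀ hP]
  linarith [key]

lemma Decay.integrable {g : EuclideanSpace ℝ (Fin n) → ℂ} (hg : Decay g) :
    Integrable g := by
  refine (hg.integrable_pow_mul 0).mono' hg.1 (Filter.Eventually.of_forall fun ξ => ?_)
  simp

lemma Decay.norm_mul_integrable {g : EuclideanSpace ℝ (Fin n) → ℂ} (hg : Decay g) :
    Integrable (fun ξ : EuclideanSpace ℝ (Fin n) => ‖ξ‖ * ‖g ξ‖) := by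
  simpa using hg.integrable_pow_mul 1

lemma Decay.const_mul {g : EuclideanSpace ℝ (Fin n) → ℂ} (hg : Decay g) (a : ℂ) :
    Decay (fun ξ => a * g ξ) := by
  refine ⟨hg.1.const_mul a, fun M => ?_⟩
  obtain ⟨B, hB⟩ := hg.2 M
  exact ⟨‖a‖ * B, fun ξ => by
    rw [norm_mul]
    calc (1 + ‖ξ‖) ^ M * (‖a‖ * ‖g ξ‖) = ‖a‖ * ((1 + ‖ξ‖) ^ M * ‖g ξ‖) := by ring
      _ ≤ ‖a‖ * B := by gcongr; exact hB ξ⟩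

lemma Decay.mul_polybound {h : EuclideanSpace ℝ (Fin n) → ℂ} (hh : Decay h)
    {q : EuclideanSpace ℝ (Fin n) → ℂ}
    (hq : AEStronglyMeasurable q (volume : Measure (EuclideanSpace ℝ (Fin n))))
    {A : ℝ} {N : ℕ} (hA : ∀ ξ, ‖q ξ‖ ≤ A * (1 + ‖ξ‖) ^ N) :
    Decay (fun ξ => q ξ * h ξ) := by
  refine ⟨hq.mul hh.1, fun M => ?_⟩
  obtain ⟨B, hB⟩ := hh.2 (M + N)
  have hB0 : 0 ≤ B := le_trans (by positivity) (hB 0)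
  have hA0 : 0 ≤ A := by
    have h1 := (norm_nonneg (q 0)).trans (hA 0)
    have h2 : (0:ℝ) < (1 + ‖(0:EuclideanSpace ℝ (Fin n))‖) ^ N := by positivity
    nlinarith [h1, h2]
  refine ⟨A * B, fun ξ => ?_⟩
  have h0 : (0:ℝ) < 1 + ‖ξ‖ := by positivity
  calc (1 + ‖ξ‖) ^ M * ‖q ξ * h ξ‖
      = (1 + ‖ξ‖) ^ M * (‖q ξ‖ * ‖h ξ‖) := by rw [norm_mul]
    _ ≤ (1 + ‖ξ‖) ^ M * ((A * (1 + ‖ξ‖) ^ N) * ‖h ξ‖) := by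
        gcongr; exact hA ξ
    _ = A * ((1 + ‖ξ‖) ^ (M + N) * ‖h ξ‖) := by ring
    _ ≤ A * B := by gcongr; exact hB ξ

lemma abs_coord_le_norm (ξ : EuclideanSpace ℝ (Fin n)) (i : Fin n) : |ξ i| ≤ ‖ξ‖ := by
  have h := abs_real_inner_le_norm ξ (EuclideanSpace.single i (1:ℝ))
  rw [EuclideanSpace.inner_single_right, EuclideanSpace.norm_single] at h
  simpa using h

lemma Decay.coord_mul {g : EuclideanSpace ℝ (Fin n) → ℂ} (hg : Decay g) (i : Fin n) :
    Decay (fun ξ => Complex.I * ((ξ i : ℝ) : ℂ) * g ξ) := by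
  constructor
  · exact (aestronglyMeasurable_const.mul
      (Complex.continuous_ofReal.comp (continuous_coord i)).aestronglyMeasurable).mul hg.1
  · intro M
    obtain ⟨B, hB⟩ := hg.2 (M + 1)
    refine ⟨B, fun ξ => ?_⟩
    have h1 : ‖Complex.I * ((ξ i : ℝ) : ℂ) * g ξ‖ ≤ ‖ξ‖ * ‖g ξ‖ := by
      rw [norm_mul, norm_mul, Complex.norm_I, one_mul, Complex.norm_real]
      gcongr
      exact abs_coord_le_norm ξ i
    calc (1 + ‖ξ‖) ^ M * ‖Complex.I * ((ξ i : ℝ) : ℂ) * g ξ‖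
        ≤ (1 + ‖ξ‖) ^ M * (‖ξ‖ * ‖g ξ‖) := by gcongr
      _ ≤ (1 + ‖ξ‖) ^ M * ((1 + ‖ξ‖) * ‖g ξ‖) := by
          gcongr; linarith [norm_nonneg ξ]
      _ = (1 + ‖ξ‖) ^ (M + 1) * ‖g ξ‖ := by ring
      _ ≤ B := hB ξ

lemma contDiff_FI {g : EuclideanSpace ℝ (Fin n) → ℂ} (hg : Decay g) :
    ContDiff ℝ (⊤ : ℕ∞) (FI g) := by
  have h1 : ContDiff ℝ (⊤ : ℕ∞) (𝓕 g) :=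
    Real.contDiff_fourier (N := ⊤) fun k _ => hg.integrable_pow_mul k
  have h2 : ContDiff ℝ (⊤ : ℕ∞) fun x : EuclideanSpace ℝ (Fin n) => -(2 * π)⁻¹ • x :=
    contDiff_id.const_smul _
  have := h1.comp h2
  convert this using 1
  funext x
  exact FI_eq g x

lemma integrable_FI_integrand {g : EuclideanSpace ℝ (Fin n) → ℂ} (hg : Decay g)
    (x : EuclideanSpace ℝ (Fin n)) :
    Integrable (fun ξ : EuclideanSpace ℝ (Fin n) =>
      Complex.exp (Complex.I * ((∑ i, ξ i * x i : ℝ) : ℂ)) * g ξ) := by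
  refine hg.integrable.norm.mono' ?_ (Filter.Eventually.of_forall fun ξ => ?_)
  · exact ((Complex.continuous_exp.comp (continuous_const.mul
      (Complex.continuous_ofReal.comp (continuous_sumcoord x)))).aestronglyMeasurable).mul hg.1
  · rw [norm_mul, norm_cexp_I_mul, one_mul]

lemma FI_const_mul (a : ℂ) (g : EuclideanSpace ℝ (Fin n) → ℂ) (x : EuclideanSpace ℝ (Fin n)) :
    FI (fun ξ => a * g ξ) x = a * FI g x := by
  rw [FI, FI, ← integral_const_mul]
  exact integral_congr_ae (Filter.Eventually.of_forall fun ξ => by ring)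

lemma FI_finset_sum {A : Type*} (s : Finset A) (F : A → EuclideanSpace ℝ (Fin n) → ℂ)
    (hF : ∀ a ∈ s, Decay (F a)) (x : EuclideanSpace ℝ (Fin n)) :
    FI (fun ξ => ∑ a ∈ s, F a ξ) x = ∑ a ∈ s, FI (F a) x := by
  rw [FI]
  rw [show (fun ξ : EuclideanSpace ℝ (Fin n) =>
      Complex.exp (Complex.I * ((∑ i, ξ i * x i : ℝ) : ℂ)) * ∑ a ∈ s, F a ξ) = fun ξ =>
      ∑ a ∈ s, Complex.exp (Complex.I * ((∑ i, ξ i * x i : ℝ) : ℂ)) * F a ξ from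
    funext fun ξ => Finset.mul_sum _ _ _]
  exact integral_finset_sum s fun a ha => integrable_FI_integrand (hF a ha) x

lemma FI_add {g1 g2 : EuclideanSpace ℝ (Fin n) → ℂ} (h1 : Decay g1) (h2 : Decay g2)
    (x : EuclideanSpace ℝ (Fin n)) :
    FI (fun ξ => g1 ξ + g2 ξ) x = FI g1 x + FI g2 x := by
  rw [FI, FI, FI, ← integral_add (integrable_FI_integrand h1 x) (integrable_FI_integrand h2 x)]
  exact integral_congr_ae (Filter.Eventually.of_forall fun ξ => by ring)

lemma integrable_fourierSMulRight' {g : EuclideanSpace ℝ (Fin n) → ℂ}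
    (hm : AEStronglyMeasurable g (volume : Measure (EuclideanSpace ℝ (Fin n))))
    (hi : Integrable (fun v : EuclideanSpace ℝ (Fin n) => ‖v‖ * ‖g v‖)) :
    Integrable (fun v => fourierSMulRight (innerSL ℝ) g v) := by
  refine ((hi.const_mul (2 * π * ‖(innerSL ℝ (E := EuclideanSpace ℝ (Fin n)))‖)).mono'
    hm.fourierSMulRight (Filter.Eventually.of_forall fun v => ?_))
  calc ‖fourierSMulRight (innerSL ℝ) g v‖ ≤ 2 * π * ‖innerSL ℝ‖ * ‖v‖ * ‖g v‖ :=
        norm_fourierSMulRight_le _ _ _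
    _ = 2 * π * ‖(innerSL ℝ (E := EuclideanSpace ℝ (Fin n)))‖ * (‖v‖ * ‖g v‖) := by ring

lemma pd_FI {g : EuclideanSpace ℝ (Fin n) → ℂ} (hg : Decay g) (i : Fin n) :
    pd i (FI g) = FI (fun ξ => Complex.I * ((ξ i : ℝ) : ℂ) * g ξ) := by
  have hm := hg.1
  have h0 := hg.integrable
  have h1 := hg.norm_mul_integrable
  funext x
  set S : EuclideanSpace ℝ (Fin n) →L[ℝ] EuclideanSpace ℝ (Fin n) :=
    (-(2 * π)⁻¹ : ℝ) • ContinuousLinearMap.id ℝ (EuclideanSpace ℝ (Fin n)) with hS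
  have hFIg : FI g = fun x => 𝓕 g (S x) := by
    funext y; rw [FI_eq]; simp [hS]
  have hder : HasFDerivAt (FI g)
      ((𝓕 (fourierSMulRight (innerSL ℝ) g) (S x)).comp S) x := by
    rw [hFIg]
    exact (Real.hasFDerivAt_fourier h0 h1 (S x)).comp x (S.hasFDerivAt)
  have : pd i (FI g) x = ((𝓕 (fourierSMulRight (innerSL ℝ) g) (S x)).comp S)
      (EuclideanSpace.single i 1) := by
    rw [pd, hder.fderiv]
  rw [this]
  have hSe : S (EuclideanSpace.single i 1) =
      (-(2 * π)⁻¹ : ℝ) • EuclideanSpace.single i 1 := by simp [hS]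
  rw [ContinuousLinearMap.comp_apply, hSe, ContinuousLinearMap.map_smul]
  rw [Real.fourier_continuousLinearMap_apply (integrable_fourierSMulRight' hm h1)]
  have hint : (fun v : EuclideanSpace ℝ (Fin n) =>
      fourierSMulRight (innerSL ℝ) g v (EuclideanSpace.single i 1)) =
      fun v => ((-(2 * π) : ℝ) : ℂ) • (Complex.I * ((v i : ℝ) : ℂ) * g v) := by
    funext v
    rw [fourierSMulRight_apply]
    have : (innerSL ℝ) v (EuclideanSpace.single i (1:ℝ)) = v i := by
      simp [EuclideanSpace.inner_single_right]
    rw [this]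
    simp only [smul_eq_mul, Complex.real_smul, Complex.ofReal_neg, Complex.ofReal_mul,
      Complex.ofReal_ofNat]
    ring
  rw [hint]
  have hsmul : 𝓕 (fun v => ((-(2 * π) : ℝ) : ℂ) •
      (Complex.I * ((v i : ℝ) : ℂ) * g v)) (S x) =
      ((-(2 * π) : ℝ) : ℂ) • 𝓕 (fun v => Complex.I * ((v i : ℝ) : ℂ) * g v) (S x) := by
    simp only [Real.fourier_eq, smul_comm (Real.fourierChar _ : Circle)]
    rw [integral_smul]
  rw [hsmul, FI_eq]
  have hπ : (2 * π : ℝ) ≠ 0 := by positivity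
  have hSx : S x = -(2 * π)⁻¹ • x := by simp [hS]
  rw [hSx]
  simp only [Complex.real_smul, smul_eq_mul, ← mul_assoc, ← Complex.ofReal_mul]
  rw [show (-(2 * π)⁻¹ * -(2 * π) : ℝ) = 1 by field_simp]
  simp

lemma iter_pd_FI (i : Fin n) (m : ℕ) {g : EuclideanSpace ℝ (Fin n) → ℂ} (hg : Decay g) :
    Decay (fun ξ => (Complex.I * ((ξ i : ℝ) : ℂ)) ^ m * g ξ) ∧
    (pd i)^[m] (FI g) = FI (fun ξ => (Complex.I * ((ξ i : ℝ) : ℂ)) ^ m * g ξ) := by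
  induction m with
  | zero =>
    have h : (fun ξ : EuclideanSpace ℝ (Fin n) =>
        (Complex.I * ((ξ i : ℝ) : ℂ)) ^ 0 * g ξ) = g := funext fun ξ => by
      rw [pow_zero, one_mul]
    rw [h]
    exact ⟨hg, by simp⟩
  | succ m ih =>
    obtain ⟨hd, he⟩ := ih
    have heq : (fun ξ : EuclideanSpace ℝ (Fin n) => Complex.I * ((ξ i : ℝ) : ℂ) *
        ((Complex.I * ((ξ i : ℝ) : ℂ)) ^ m * g ξ)) =
        fun ξ => (Complex.I * ((ξ i : ℝ) : ℂ)) ^ (m + 1) * g ξ := funext fun ξ => by ring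
    constructor
    · rw [← heq]; exact hd.coord_mul i
    · rw [Function.iterate_succ_apply', he, pd_FI hd i, heq]

lemma foldr_FI (α : Fin n → ℕ) (l : List (Fin n)) {g : EuclideanSpace ℝ (Fin n) → ℂ}
    (hg : Decay g) :
    Decay (fun ξ => (l.map fun i => (Complex.I * ((ξ i : ℝ) : ℂ)) ^ α i).prod * g ξ) ∧
    (l.foldr (fun i h => (pd i)^[α i] ∘ h) id) (FI g)
      = FI (fun ξ => (l.map fun i => (Complex.I * ((ξ i : ℝ) : ℂ)) ^ α i).prod * g ξ) := by
  induction l with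
  | nil =>
    have h : (fun ξ : EuclideanSpace ℝ (Fin n) =>
        (List.map (fun i => (Complex.I * ((ξ i : ℝ) : ℂ)) ^ α i) []).prod * g ξ) = g :=
      funext fun ξ => by simp
    rw [h]
    exact ⟨hg, by simp⟩
  | cons i l ih =>
    obtain ⟨hd, he⟩ := ih
    have hstep := iter_pd_FI i (α i) hd
    have heq : (fun ξ : EuclideanSpace ℝ (Fin n) => (Complex.I * ((ξ i : ℝ) : ℂ)) ^ α i *
        ((l.map fun j => (Complex.I * ((ξ j : ℝ) : ℂ)) ^ α j).prod * g ξ)) =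
        fun ξ => ((i :: l).map fun j => (Complex.I * ((ξ j : ℝ) : ℂ)) ^ α j).prod * g ξ :=
      funext fun ξ => by rw [List.map_cons, List.prod_cons]; ring
    constructor
    · rw [← heq]; exact hstep.1
    · rw [List.foldr_cons, Function.comp_apply, he, hstep.2, heq]

lemma mderiv_FI (α : Fin n → ℕ) {g : EuclideanSpace ℝ (Fin n) → ℂ} (hg : Decay g) :
    Decay (fun ξ => (Complex.I ^ (∑ i, α i) * ∏ i, ((ξ i : ℝ) : ℂ) ^ α i) * g ξ) ∧
    mderiv α (FI g)
      = FI (fun ξ => (Complex.I ^ (∑ i, α i) * ∏ i, ((ξ i : ℝ) : ℂ) ^ α i) * g ξ) := by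
  have h := foldr_FI α (List.finRange n) hg
  have hprod : (fun ξ : EuclideanSpace ℝ (Fin n) =>
      ((List.finRange n).map fun i => (Complex.I * ((ξ i : ℝ) : ℂ)) ^ α i).prod * g ξ) =
      fun ξ => (Complex.I ^ (∑ i, α i) * ∏ i, ((ξ i : ℝ) : ℂ) ^ α i) * g ξ := by
    funext ξ
    congr 1
    rw [← Fin.prod_univ_def, ← Finset.prod_pow_eq_pow_sum, ← Finset.prod_mul_distrib]
    exact Finset.prod_congr rfl fun i _ => mul_pow _ _ _
  rw [hprod] at h
  exact ⟨h.1, h.2⟩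

lemma neg_I_pow_mul_I_pow (k : ℕ) : (-Complex.I) ^ k * Complex.I ^ k = 1 := by
  rw [← mul_pow, neg_mul, Complex.I_mul_I, neg_neg, one_pow]

lemma diffOp_FI (d : ℕ) (c : (Fin n → ℕ) → ℂ) {g : EuclideanSpace ℝ (Fin n) → ℂ}
    (hg : Decay g) (x : EuclideanSpace ℝ (Fin n)) :
    diffOp n d (fun α _ => c α) (FI g) x
      = FI (fun ξ => (∑ α ∈ mIdx n d, c α * ∏ i, ((ξ i : ℝ) : ℂ) ^ α i) * g ξ) x := by
  have hqdecay : ∀ α : Fin n → ℕ,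
      Decay (fun ξ => (c α * ∏ i, ((ξ i : ℝ) : ℂ) ^ α i) * g ξ) := by
    intro α
    have heq : (fun ξ : EuclideanSpace ℝ (Fin n) => (c α * (-Complex.I) ^ (∑ i, α i)) *
        ((Complex.I ^ (∑ i, α i) * ∏ i, ((ξ i : ℝ) : ℂ) ^ α i) * g ξ)) =
        fun ξ => (c α * ∏ i, ((ξ i : ℝ) : ℂ) ^ α i) * g ξ := by
      funext ξ
      have h := neg_I_pow_mul_I_pow (∑ i, α i)
      linear_combination (c α * (∏ i, ((ξ i : ℝ) : ℂ) ^ α i) * g ξ) * h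
    rw [← heq]
    exact ((mderiv_FI α hg).1).const_mul _
  rw [diffOp]
  have step : ∀ α ∈ mIdx n d, c α * ((-Complex.I) ^ (∑ i, α i) * mderiv α (FI g) x)
      = FI (fun ξ => (c α * ∏ i, ((ξ i : ℝ) : ℂ) ^ α i) * g ξ) x := by
    intro α _
    obtain ⟨hd, he⟩ := mderiv_FI α hg
    rw [he]
    have h1 : (fun ξ : EuclideanSpace ℝ (Fin n) =>
        (Complex.I ^ (∑ i, α i) * ∏ i, ((ξ i : ℝ) : ℂ) ^ α i) * g ξ)
        = fun ξ => Complex.I ^ (∑ i, α i) * ((∏ i, ((ξ i : ℝ) : ℂ) ^ α i) * g ξ) :=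
      funext fun ξ => by ring
    have h2 : (fun ξ : EuclideanSpace ℝ (Fin n) => (c α * ∏ i, ((ξ i : ℝ) : ℂ) ^ α i) * g ξ)
        = fun ξ => c α * ((∏ i, ((ξ i : ℝ) : ℂ) ^ α i) * g ξ) := funext fun ξ => by ring
    rw [h1, FI_const_mul, h2, FI_const_mul]
    have h := neg_I_pow_mul_I_pow (∑ i, α i)
    linear_combination (c α * FI (fun ξ => (∏ i, ((ξ i : ℝ) : ℂ) ^ α i) * g ξ) x) * h
  rw [Finset.sum_congr rfl step, ← FI_finset_sum (mIdx n d) _ (fun α _ => hqdecay α) x]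
  congr 1
  funext ξ
  rw [← Finset.sum_mul]


lemma FI_fourier_inv {n : ℕ} (f : SchwartzMap (EuclideanSpace ℝ (Fin n)) ℂ) (a : ℝ)
    (h : EuclideanSpace ℝ (Fin n) → ℂ)
    (hh : ∀ ξ, h ξ = (a:ℂ) * 𝓕 (⇑f) ((2*π)⁻¹ • ξ)) (x : EuclideanSpace ℝ (Fin n)) :
    FI h x = (a:ℂ) * ((((2*π:ℝ)^(n:ℕ) : ℝ)) : ℂ) * f x := by
  have hπ2 : (0:ℝ) < 2 * π := by positivity
  set G : EuclideanSpace ℝ (Fin n) → ℂ :=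
    fun w => Complex.exp (((2 * π * ⟪w, x⟫ : ℝ) : ℂ) * Complex.I) * 𝓕 (⇑f) w with hG
  have step1 : ∀ ξ : EuclideanSpace ℝ (Fin n),
      Complex.exp (Complex.I * ((∑ i, ξ i * x i : ℝ) : ℂ)) * h ξ
        = (a:ℂ) * G ((2*π)⁻¹ • ξ) := by
    intro ξ
    rw [hh ξ, hG]
    beta_reduce
    have h1 : (2 * π * ⟪(2*π)⁻¹ • ξ, x⟫ : ℝ) = ∑ i, ξ i * x i := by
      rw [real_inner_smul_left, show ⟪ξ, x⟫ = ∑ i, ξ i * x i by simp [PiLp.inner_apply, mul_comm]]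
      field_simp
    rw [h1, mul_comm Complex.I]
    ring
  rw [FI]
  simp_rw [step1]
  rw [integral_const_mul]
  have step2 : ∫ ξ : EuclideanSpace ℝ (Fin n), G ((2*π)⁻¹ • ξ)
      = ((2*π:ℝ)^(n:ℕ) : ℝ) • ∫ w, G w := by
    have := Measure.integral_comp_inv_smul_of_nonneg (volume : Measure (EuclideanSpace ℝ (Fin n)))
      G hπ2.le
    rwa [finrank_euclideanSpace_fin] at this
  have hFf_int : Integrable (𝓕 (⇑f)) := (SchwartzMap.fourierTransformCLM ℂ f).integrable
  have step3 : ∫ w, G w = f x := by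
    have hinv : 𝓕⁻ (𝓕 (⇑f)) x = f x :=
      MeasureTheory.Integrable.fourierInv_fourier_eq f.integrable hFf_int (f.continuous.continuousAt)
    rw [← hinv, Real.fourierInv_eq']
    refine integral_congr_ae (Filter.Eventually.of_forall fun v => ?_)
    beta_reduce
    rw [smul_eq_mul]
  rw [step2, step3]
  simp [Complex.real_smul]
  ring

lemma FI_conv {n : ℕ} (f : SchwartzMap (EuclideanSpace ℝ (Fin n)) ℂ) (a : ℝ)
    (fhat : EuclideanSpace ℝ (Fin n) → ℂ)
    (hfhat : ∀ ξ, fhat ξ = (a:ℂ) * ∫ y : EuclideanSpace ℝ (Fin n),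
      Complex.exp (-(Complex.I * ((∑ i, ξ i * y i : ℝ) : ℂ))) * f y)
    (q : EuclideanSpace ℝ (Fin n) → ℂ) (hqc : Continuous q) (hqi : Integrable q)
    (x : EuclideanSpace ℝ (Fin n)) :
    FI (fun ξ => q ξ * fhat ξ) x = (a:ℂ) * ∫ y : EuclideanSpace ℝ (Fin n),
      (∫ ξ : EuclideanSpace ℝ (Fin n),
        Complex.exp (Complex.I * ((∑ i, ξ i * (x - y) i : ℝ) : ℂ)) * q ξ) * f y := by
  set H : EuclideanSpace ℝ (Fin n) × EuclideanSpace ℝ (Fin n) → ℂ := fun z =>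
    (a:ℂ) * (Complex.exp (Complex.I * ((∑ i, z.1 i * x i : ℝ) : ℂ)) * (q z.1 *
      (Complex.exp (-(Complex.I * ((∑ i, z.1 i * z.2 i : ℝ) : ℂ))) * f z.2))) with hH
  -- continuity of H
  have hsum1 : Continuous fun z : EuclideanSpace ℝ (Fin n) × EuclideanSpace ℝ (Fin n) =>
      (∑ i, z.1 i * x i : ℝ) :=
    continuous_finset_sum _ fun i _ =>
      ((continuous_coord i).comp continuous_fst).mul continuous_const
  have hsum2 : Continuous fun z : EuclideanSpace ℝ (Fin n) × EuclideanSpace ℝ (Fin n) =>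
      (∑ i, z.1 i * z.2 i : ℝ) :=
    continuous_finset_sum _ fun i _ =>
      ((continuous_coord i).comp continuous_fst).mul ((continuous_coord i).comp continuous_snd)
  have hHc : Continuous H := by
    apply continuous_const.mul
    apply (Complex.continuous_exp.comp
      (continuous_const.mul (Complex.continuous_ofReal.comp hsum1))).mul
    apply (hqc.comp continuous_fst).mul
    exact (Complex.continuous_exp.comp
      ((continuous_const.mul (Complex.continuous_ofReal.comp hsum2)).neg)).mul
      (f.continuous.comp continuous_snd)
  have hnorm : ∀ z : EuclideanSpace ℝ (Fin n) × EuclideanSpace ℝ (Fin n),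
      ‖H z‖ = ‖a‖ * ‖q z.1‖ * ‖f z.2‖ := by
    intro z
    rw [hH]
    beta_reduce
    rw [norm_mul, norm_mul, norm_mul, norm_mul]
    rw [show ‖Complex.exp (Complex.I * ((∑ i, z.1 i * x i : ℝ) : ℂ))‖ = 1 by
      rw [mul_comm]; exact Complex.norm_exp_ofReal_mul_I _]
    rw [show ‖Complex.exp (-(Complex.I * ((∑ i, z.1 i * z.2 i : ℝ) : ℂ)))‖ = 1 by
      rw [show (-(Complex.I * ((∑ i, z.1 i * z.2 i : ℝ) : ℂ))) =
        ((-(∑ i, z.1 i * z.2 i) : ℝ) : ℂ) * Complex.I by push_cast; ring]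
      exact Complex.norm_exp_ofReal_mul_I _]
    rw [Complex.norm_real]
    ring
  have hHint : Integrable H ((volume : Measure (EuclideanSpace ℝ (Fin n))).prod volume) := by
    refine (((hqi.norm.const_mul ‖a‖).mul_prod f.integrable.norm)).mono'
      hHc.aestronglyMeasurable (Filter.Eventually.of_forall fun z => ?_)
    exact le_of_eq (hnorm z)
  have step1 : FI (fun ξ => q ξ * fhat ξ) x
      = ∫ ξ : EuclideanSpace ℝ (Fin n), ∫ y : EuclideanSpace ℝ (Fin n), H (ξ, y) := by
    rw [FI]
    refine integral_congr_ae (Filter.Eventually.of_forall fun ξ => ?_)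
    beta_reduce
    calc Complex.exp (Complex.I * ((∑ i, ξ i * x i : ℝ) : ℂ)) * (q ξ * fhat ξ)
        = ((a:ℂ) * Complex.exp (Complex.I * ((∑ i, ξ i * x i : ℝ) : ℂ)) * q ξ) *
          ∫ y : EuclideanSpace ℝ (Fin n),
            Complex.exp (-(Complex.I * ((∑ i, ξ i * y i : ℝ) : ℂ))) * f y := by
          rw [hfhat ξ]; ring
      _ = ∫ y : EuclideanSpace ℝ (Fin n),
            ((a:ℂ) * Complex.exp (Complex.I * ((∑ i, ξ i * x i : ℝ) : ℂ)) * q ξ) *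
            (Complex.exp (-(Complex.I * ((∑ i, ξ i * y i : ℝ) : ℂ))) * f y) :=
          (integral_const_mul _ _).symm
      _ = ∫ y : EuclideanSpace ℝ (Fin n), H (ξ, y) :=
          integral_congr_ae (Filter.Eventually.of_forall fun y => by rw [hH]; ring)
  have step2 : (∫ ξ : EuclideanSpace ℝ (Fin n), ∫ y : EuclideanSpace ℝ (Fin n), H (ξ, y))
      = ∫ y : EuclideanSpace ℝ (Fin n), ∫ ξ : EuclideanSpace ℝ (Fin n), H (ξ, y) :=
    integral_integral_swap hHint
  have hexp : ∀ (ξ y : EuclideanSpace ℝ (Fin n)),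
      Complex.exp (Complex.I * ((∑ i, ξ i * x i : ℝ) : ℂ)) *
        Complex.exp (-(Complex.I * ((∑ i, ξ i * y i : ℝ) : ℂ)))
      = Complex.exp (Complex.I * ((∑ i, ξ i * (x - y) i : ℝ) : ℂ)) := by
    intro ξ y
    rw [← Complex.exp_add]
    congr 1
    have hsub : (∑ i, ξ i * (x - y) i : ℝ) = (∑ i, ξ i * x i) - ∑ i, ξ i * y i := by
      rw [← Finset.sum_sub_distrib]
      refine Finset.sum_congr rfl fun i _ => ?_
      have : (x - y) i = x i - y i := by simp
      rw [this]; ring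
    rw [hsub]
    push_cast
    ring
  have step3 : ∀ y : EuclideanSpace ℝ (Fin n),
      (∫ ξ : EuclideanSpace ℝ (Fin n), H (ξ, y))
      = (a:ℂ) * ((∫ ξ : EuclideanSpace ℝ (Fin n),
          Complex.exp (Complex.I * ((∑ i, ξ i * (x - y) i : ℝ) : ℂ)) * q ξ) * f y) := by
    intro y
    rw [← integral_mul_const, ← integral_const_mul]
    refine integral_congr_ae (Filter.Eventually.of_forall fun ξ => ?_)
    rw [hH]
    beta_reduce
    rw [← hexp ξ y]
    ring
  rw [step1, step2, ← integral_const_mul]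
  refine integral_congr_ae (Filter.Eventually.of_forall fun y => ?_)
  beta_reduce
  rw [step3 y]

end Stmt3Aux


open FourierTransform Real Complex RealInnerProductSpace in
/-- parametrix for a constant-coefficient operator `P = Σ_{|α|≤d} c_α D^α`
whose symbol `p` is nonvanishing and of tempered inverse growth for `|ξ| ≥ R`.  With a
smooth cutoff `χ` vanishing for `|ξ| ≤ R` and equal to `1` for `|ξ| ≥ R+1`, the operator
`Qf = (2π)^{-n/2} ∫ e^{iξ·x} (χ(ξ)/p(ξ)) f̂(ξ) dξ` satisfies: `Qf` is smooth, `r` is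
smooth, and `P(Qf)(x) = f(x) + ∫ r(x-y) f(y) dy`, where
`r(z) = (2π)^{-n} ∫ e^{iξ·z}(χ(ξ)-1) dξ`. -/
theorem stmt3 (n d : ℕ) (c : (Fin n → ℕ) → ℂ) (R : ℝ) (hR : 0 < R)
    (p : EuclideanSpace ℝ (Fin n) → ℂ)
    (hp : ∀ ξ, p ξ = ∑ α ∈ mIdx n d, c α * ∏ i, ((ξ i : ℝ) : ℂ) ^ α i)
    (hpz : ∀ ξ, R ≤ ‖ξ‖ → p ξ ≠ 0)
    (C : ℝ) (hC : 0 < C) (N : ℕ)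
    (hbound : ∀ ξ, R ≤ ‖ξ‖ → ‖(p ξ)⁻¹‖ ≤ C * (1 + ‖ξ‖) ^ N)
    (χ : EuclideanSpace ℝ (Fin n) → ℝ) (hχ : ContDiff ℝ (⊤ : ℕ∞) χ)
    (hχ0 : ∀ ξ, ‖ξ‖ ≤ R → χ ξ = 0) (hχ1 : ∀ ξ, R + 1 ≤ ‖ξ‖ → χ ξ = 1)
    (f : SchwartzMap (EuclideanSpace ℝ (Fin n)) ℂ)
    (fhat : EuclideanSpace ℝ (Fin n) → ℂ)
    (hfhat : ∀ ξ, fhat ξ = (((2 * Real.pi) ^ (-(n : ℝ) / 2) : ℝ) : ℂ) *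
      ∫ y : EuclideanSpace ℝ (Fin n),
        Complex.exp (-(Complex.I * ((∑ i, ξ i * y i : ℝ) : ℂ))) * f y)
    (Qf : EuclideanSpace ℝ (Fin n) → ℂ)
    (hQf : ∀ x, Qf x = (((2 * Real.pi) ^ (-(n : ℝ) / 2) : ℝ) : ℂ) *
      ∫ ξ : EuclideanSpace ℝ (Fin n),
        Complex.exp (Complex.I * ((∑ i, ξ i * x i : ℝ) : ℂ)) * (((χ ξ : ℂ) / p ξ) * fhat ξ))
    (r : EuclideanSpace ℝ (Fin n) → ℂ)
    (hr : ∀ z, r z = (((2 * Real.pi) ^ (-(n : ℝ)) : ℝ) : ℂ) *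
      ∫ ξ : EuclideanSpace ℝ (Fin n),
        Complex.exp (Complex.I * ((∑ i, ξ i * z i : ℝ) : ℂ)) * ((χ ξ : ℂ) - 1)) :
    ContDiff ℝ (⊤ : ℕ∞) Qf ∧ ContDiff ℝ (⊤ : ℕ∞) r ∧
    ∀ x, diffOp n d (fun α _ => c α) Qf x
      = f x + ∫ y : EuclideanSpace ℝ (Fin n), r (x - y) * f y := by
  classical
  have hπ2 : (0:ℝ) < 2 * π := by positivity
  set c₀ : ℝ := (2 * π) ^ (-(n:ℝ)/2) with hc₀def
  have hc₀pos : 0 < c₀ := Real.rpow_pos_of_pos hπ2 _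
  -- fhat in terms of the Mathlib Fourier transform
  have hfhatF : ∀ ξ, fhat ξ = (c₀:ℂ) * 𝓕 (⇑f) ((2*π)⁻¹ • ξ) := by
    intro ξ
    rw [hfhat ξ, Real.fourier_eq']
    congr 1
    refine integral_congr_ae (Filter.Eventually.of_forall fun y => ?_)
    have hπ : (2 * π : ℝ) ≠ 0 := by positivity
    have h1 : ⟪y, (2*π)⁻¹ • ξ⟫ = (2*π)⁻¹ * ⟪y, ξ⟫ := real_inner_smul_right _ _ _
    have h2 : ⟪y, ξ⟫ = ∑ i, y i * ξ i := by simp [PiLp.inner_apply, mul_comm]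
    have h3 : (-2 * π * ⟪y, (2*π)⁻¹ • ξ⟫ : ℝ) = -(∑ i, ξ i * y i) := by
      rw [h1, h2]
      rw [show (∑ i, y i * ξ i) = ∑ i, ξ i * y i from
        Finset.sum_congr rfl fun i _ => mul_comm _ _]
      field_simp
    simp only [smul_eq_mul]
    rw [h3]
    congr 1
    push_cast
    ring
  -- uniform bound for χ
  obtain ⟨M₀, hM₀⟩ := (isCompact_closedBall (0 : EuclideanSpace ℝ (Fin n))
    (R+1)).exists_bound_of_continuousOn (hχ.continuous.continuousOn)
  set Mχ : ℝ := max M₀ 1 with hMχdef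
  have hMχ1 : (1:ℝ) ≤ Mχ := le_max_right _ _
  have hMχ0 : (0:ℝ) < Mχ := lt_of_lt_of_le one_pos hMχ1
  have hMχ : ∀ ξ, |χ ξ| ≤ Mχ := by
    intro ξ
    rcases le_or_gt ‖ξ‖ (R+1) with h | h
    · have hmem : ξ ∈ Metric.closedBall (0 : EuclideanSpace ℝ (Fin n)) (R+1) := by
        simpa [Metric.mem_closedBall, dist_zero_right] using h
      have := hM₀ ξ hmem
      rw [Real.norm_eq_abs] at this
      exact le_trans this (le_max_left _ _)
    · rw [hχ1 ξ h.le]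
      simpa using hMχ1
  -- decay of fhat
  have hfhat_decay : Stmt3Aux.Decay fhat := by
    constructor
    · have hcont : Continuous fun ξ : EuclideanSpace ℝ (Fin n) =>
          𝓕 (⇑f) ((2*π)⁻¹ • ξ) :=
        (SchwartzMap.fourierTransformCLM ℂ f).continuous.comp
          (continuous_const_smul ((2*π)⁻¹ : ℝ))
      have : fhat = fun ξ => (c₀:ℂ) * 𝓕 (⇑f) ((2*π)⁻¹ • ξ) := funext hfhatF
      rw [this]
      exact (continuous_const.mul hcont).aestronglyMeasurable
    · intro M
      set F2 : SchwartzMap (EuclideanSpace ℝ (Fin n)) ℂ :=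
        SchwartzMap.fourierTransformCLM ℂ f with hF2
      set D : ℝ := 2^M * (Finset.Iic (M,0)).sup
        (fun m => SchwartzMap.seminorm ℝ m.1 m.2) F2 with hD
      refine ⟨c₀ * ((2*π)^M * D), fun ξ => ?_⟩
      set w : EuclideanSpace ℝ (Fin n) := (2*π)⁻¹ • ξ with hw
      have hwn : ‖ξ‖ = (2*π) * ‖w‖ := by
        rw [hw, norm_smul, Real.norm_eq_abs, abs_of_pos (by positivity : (0:ℝ) < (2*π)⁻¹)]
        field_simp
      have h1 : (1 + ‖ξ‖) ≤ (2*π) * (1 + ‖w‖) := by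
        rw [hwn]
        nlinarith [Real.pi_gt_three, norm_nonneg w]
      have h2 : ‖fhat ξ‖ = c₀ * ‖F2 w‖ := by
        rw [hfhatF ξ, norm_mul, Complex.norm_real, Real.norm_eq_abs, abs_of_pos hc₀pos]
        rfl
      have h3 : (1 + ‖w‖)^M * ‖F2 w‖ ≤ D := by
        have := SchwartzMap.one_add_le_sup_seminorm_apply (𝕜 := ℝ) (m := (M,0))
          le_rfl le_rfl F2 w
        simpa [hD] using this
      have h4 : (0:ℝ) ≤ ‖F2 w‖ := norm_nonneg _
      calc (1 + ‖ξ‖)^M * ‖fhat ξ‖ ≤ ((2*π) * (1 + ‖w‖))^M * ‖fhat ξ‖ := by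
            gcongr
        _ = c₀ * ((2*π)^M * ((1 + ‖w‖)^M * ‖F2 w‖)) := by rw [h2, mul_pow]; ring
        _ ≤ c₀ * ((2*π)^M * D) := by gcongr
  -- p is continuous
  have hpc : Continuous p := by
    rw [funext hp]
    exact continuous_finset_sum _ fun α _ => continuous_const.mul
      (continuous_finset_prod _ fun i _ =>
        (Complex.continuous_ofReal.comp (Stmt3Aux.continuous_coord i)).pow _)
  -- bound for the multiplier χ/p
  have hmq : ∀ ξ, ‖((χ ξ : ℂ) / p ξ)‖ ≤ (Mχ * C) * (1 + ‖ξ‖)^N := by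
    intro ξ
    rcases le_or_gt R ‖ξ‖ with h | h
    · rw [div_eq_mul_inv, norm_mul, Complex.norm_real, Real.norm_eq_abs]
      calc |χ ξ| * ‖(p ξ)⁻¹‖ ≤ Mχ * (C * (1 + ‖ξ‖)^N) :=
            mul_le_mul (hMχ ξ) (hbound ξ h) (norm_nonneg _) hMχ0.le
        _ = (Mχ * C) * (1 + ‖ξ‖)^N := by ring
    · rw [hχ0 ξ h.le]
      simp only [Complex.ofReal_zero, zero_div, norm_zero]
      positivity
  have hm_meas : AEStronglyMeasurable (fun ξ : EuclideanSpace ℝ (Fin n) =>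
      (χ ξ : ℂ) / p ξ) volume :=
    ((Complex.measurable_ofReal.comp hχ.continuous.measurable).div
      hpc.measurable).aestronglyMeasurable
  set g : EuclideanSpace ℝ (Fin n) → ℂ :=
    fun ξ => (c₀:ℂ) * ((χ ξ : ℂ) / p ξ * fhat ξ) with hgdef
  have hgd : Stmt3Aux.Decay g :=
    (hfhat_decay.mul_polybound hm_meas hmq).const_mul _
  have hQfFI : Qf = Stmt3Aux.FI g := by
    funext x
    rw [hQf x, Stmt3Aux.FI, ← integral_const_mul]
    exact integral_congr_ae (Filter.Eventually.of_forall fun ξ => by rw [hgdef]; ring)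
  -- decay of χ - 1
  have hrd : Stmt3Aux.Decay (fun ξ : EuclideanSpace ℝ (Fin n) => (χ ξ : ℂ) - 1) := by
    constructor
    · exact ((Complex.continuous_ofReal.comp hχ.continuous).sub
        continuous_const).aestronglyMeasurable
    · intro M
      refine ⟨(2+R)^M * (Mχ+1), fun ξ => ?_⟩
      beta_reduce
      rcases le_or_gt ‖ξ‖ (R+1) with h | h
      · have h1 : ‖(χ ξ : ℂ) - 1‖ ≤ Mχ + 1 := by
          calc ‖(χ ξ : ℂ) - 1‖ ≤ ‖(χ ξ : ℂ)‖ + ‖(1:ℂ)‖ := norm_sub_le _ _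
            _ = |χ ξ| + 1 := by rw [Complex.norm_real, Real.norm_eq_abs, norm_one]
            _ ≤ Mχ + 1 := by linarith [hMχ ξ]
        have h2 : (1 + ‖ξ‖)^M ≤ (2+R)^M :=
          pow_le_pow_left₀ (by positivity) (by linarith) M
        exact mul_le_mul h2 h1 (norm_nonneg _) (by positivity)
      · have h0 : χ ξ = 1 := hχ1 ξ h.le
        rw [h0]
        simp only [Complex.ofReal_one, sub_self, norm_zero, mul_zero]
        positivity
  -- the constants
  have hconst2 : c₀ * c₀ = (2*π) ^ (-(n:ℝ)) := by
    rw [show (-(n:ℝ)) = (-(n:ℝ)/2 + -(n:ℝ)/2) by ring, Real.rpow_add hπ2, hc₀def]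
  have hconst1 : c₀ * c₀ * (2*π)^(n:ℕ) = 1 := by
    rw [hconst2, ← Real.rpow_natCast (2*π) n, ← Real.rpow_add hπ2]
    simp
  refine ⟨?_, ?_, ?_⟩
  · rw [hQfFI]
    exact Stmt3Aux.contDiff_FI hgd
  · have hreq : r = fun z => (((2*π:ℝ) ^ (-(n:ℝ)) : ℝ) : ℂ) *
        Stmt3Aux.FI (fun ξ : EuclideanSpace ℝ (Fin n) => (χ ξ : ℂ) - 1) z :=
      funext fun z => by rw [hr z, Stmt3Aux.FI]
    rw [hreq]
    exact contDiff_const.mul (Stmt3Aux.contDiff_FI hrd)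
  · intro x
    have h1 : diffOp n d (fun α _ => c α) Qf x
        = Stmt3Aux.FI (fun ξ => (∑ α ∈ mIdx n d,
            c α * ∏ i, ((ξ i : ℝ) : ℂ) ^ α i) * g ξ) x := by
      rw [hQfFI]
      exact Stmt3Aux.diffOp_FI d c hgd x
    have hsplit : (fun ξ => (∑ α ∈ mIdx n d, c α * ∏ i, ((ξ i : ℝ) : ℂ) ^ α i) * g ξ)
        = fun ξ : EuclideanSpace ℝ (Fin n) =>
            (c₀:ℂ) * fhat ξ + (c₀:ℂ) * (((χ ξ : ℂ) - 1) * fhat ξ) := by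
      funext ξ
      rw [← hp ξ, hgdef]
      by_cases hp0 : p ξ = 0
      · have hnR : ‖ξ‖ ≤ R := by
          by_contra hh
          push_neg at hh
          exact hpz ξ hh.le hp0
        have hc : χ ξ = 0 := hχ0 ξ hnR
        rw [hp0, hc]
        push_cast
        ring
      · field_simp
        ring
    have hd1 : Stmt3Aux.Decay (fun ξ : EuclideanSpace ℝ (Fin n) => (c₀:ℂ) * fhat ξ) :=
      hfhat_decay.const_mul _
    have hqb : ∀ ξ : EuclideanSpace ℝ (Fin n),
        ‖(χ ξ : ℂ) - 1‖ ≤ (Mχ + 1) * (1 + ‖ξ‖) ^ 0 := by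
      intro ξ
      rw [pow_zero, mul_one]
      calc ‖(χ ξ : ℂ) - 1‖ ≤ ‖(χ ξ : ℂ)‖ + ‖(1:ℂ)‖ := norm_sub_le _ _
        _ = |χ ξ| + 1 := by rw [Complex.norm_real, Real.norm_eq_abs, norm_one]
        _ ≤ Mχ + 1 := by linarith [hMχ ξ]
    have hd2 : Stmt3Aux.Decay (fun ξ : EuclideanSpace ℝ (Fin n) =>
        (c₀:ℂ) * (((χ ξ : ℂ) - 1) * fhat ξ)) :=
      (hfhat_decay.mul_polybound hrd.1 hqb).const_mul _
    have hT1 : Stmt3Aux.FI (fun ξ : EuclideanSpace ℝ (Fin n) => (c₀:ℂ) * fhat ξ) x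
        = f x := by
      rw [Stmt3Aux.FI_const_mul, Stmt3Aux.FI_fourier_inv f c₀ fhat hfhatF x]
      have hcc : (c₀:ℂ) * ((c₀:ℂ) * (((2*π:ℝ)^(n:ℕ) : ℝ) : ℂ) * f x)
          = ((c₀ * c₀ * (2*π)^(n:ℕ) : ℝ) : ℂ) * f x := by
        push_cast
        ring
      rw [hcc, hconst1]
      simp
    have hq_cont : Continuous (fun ξ : EuclideanSpace ℝ (Fin n) => (χ ξ : ℂ) - 1) :=
      (Complex.continuous_ofReal.comp hχ.continuous).sub continuous_const
    have hq_int : Integrable (fun ξ : EuclideanSpace ℝ (Fin n) => (χ ξ : ℂ) - 1) := by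
      refine hq_cont.integrable_of_hasCompactSupport ?_
      refine HasCompactSupport.intro
        (isCompact_closedBall (0 : EuclideanSpace ℝ (Fin n)) (R+1)) fun ξ hξ => ?_
      have hout : R + 1 ≤ ‖ξ‖ := by
        have := hξ
        rw [Metric.mem_closedBall, dist_zero_right, not_le] at this
        exact this.le
      rw [hχ1 ξ hout]
      simp
    have hT2 : Stmt3Aux.FI (fun ξ : EuclideanSpace ℝ (Fin n) =>
        (c₀:ℂ) * (((χ ξ : ℂ) - 1) * fhat ξ)) x
        = ∫ y : EuclideanSpace ℝ (Fin n), r (x - y) * f y := by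
      rw [Stmt3Aux.FI_const_mul,
        Stmt3Aux.FI_conv f c₀ fhat hfhat _ hq_cont hq_int x, ← integral_const_mul,
        ← integral_const_mul]
      refine integral_congr_ae (Filter.Eventually.of_forall fun y => ?_)
      beta_reduce
      rw [hr (x - y)]
      have hconst2C : (c₀:ℂ) * (c₀:ℂ) = (((2*π:ℝ) ^ (-(n:ℝ)) : ℝ) : ℂ) := by
        rw [← Complex.ofReal_mul, hconst2]
      linear_combination ((∫ ξ : EuclideanSpace ℝ (Fin n),
        Complex.exp (Complex.I * ((∑ i, ξ i * (x - y) i : ℝ) : ℂ)) * ((χ ξ : ℂ) - 1))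
        * f y) * hconst2C
    rw [h1, hsplit, Stmt3Aux.FI_add hd1 hd2 x, hT1, hT2]
end

section
/- Let m > 0, λ > 0, c > 2m, and let u : [2m, c) → ℝ be continuous on [2m, c) and differentiable on (2m, c) with u′ bounded on (2m, c). Suppose that on (2m, c) the function r ↦ (r² − 2mr) u′(r) is differentiable with derivative equal to −λ² r³ u(r)/(r − 2m) (this is the equation (r²(1−2m/r)u′)′ + λ² r² (1−2m/r)^{-1} u = 0). Then u(2m) = 0. -/
lemma stmt12_aux (m lam c : ℝ) (hm : 0 < m) (hlam : 0 < lam) (hc : 2 * m < c)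
    (u u' : ℝ → ℝ) (hcont : ContinuousOn u (Set.Ico (2 * m) c))
    (M : ℝ) (hbdd : ∀ r ∈ Set.Ioo (2 * m) c, |u' r| ≤ M)
    (heq : ∀ r ∈ Set.Ioo (2 * m) c,
      HasDerivAt (fun t : ℝ => (t ^ 2 - 2 * m * t) * u' t)
        (-(lam ^ 2) * r ^ 3 * u r / (r - 2 * m)) r)
    (hpos : 0 < u (2 * m)) : False := by
  set a := u (2 * m) with ha
  -- find b with u r > a/2 on [2m, b)
  have h2m : (2 * m) ∈ Set.Ico (2 * m) c := ⟨le_refl _, hc⟩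
  have hca := hcont _ h2m
  have hmem : Set.Ioi (a / 2) ∈ nhds a := Ioi_mem_nhds (by linarith)
  have hev := hca hmem
  rw [Filter.mem_map, Metric.mem_nhdsWithin_iff] at hev
  obtain ⟨ε, hε, hball⟩ := hev
  set b : ℝ := min (2 * m + ε / 2) ((2 * m + c) / 2) with hb
  have hb1 : 2 * m < b := lt_min (by linarith) (by linarith)
  have hb2 : b < c := lt_of_le_of_lt (min_le_right _ _) (by linarith)
  have hub : ∀ r ∈ Set.Ioo (2 * m) b, a / 2 < u r := by
    intro r hr
    have hrε : r < 2 * m + ε / 2 := lt_of_lt_of_le hr.2 (min_le_left _ _)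
    have hrc : r < c := lt_trans hr.2 hb2
    have : r ∈ Metric.ball (2 * m) ε ∩ Set.Ico (2 * m) c := by
      constructor
      · rw [Metric.mem_ball, Real.dist_eq, abs_lt]; constructor <;> linarith [hr.1]
      · exact ⟨le_of_lt hr.1, hrc⟩
    exact hball this
  -- constants
  set K : ℝ := lam ^ 2 * (2 * m) ^ 3 * (a / 2) with hK
  have hKpos : 0 < K := by positivity
  set h : ℝ → ℝ := fun r => (r ^ 2 - 2 * m * r) * u' r + (K / 2) * Real.log (r - 2 * m) with hh
  have hderivh : ∀ r ∈ Set.Ioo (2 * m) b,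
      HasDerivAt h (-(lam ^ 2) * r ^ 3 * u r / (r - 2 * m) + (K / 2) * (r - 2 * m)⁻¹) r := by
    intro r hr
    have hrc : r ∈ Set.Ioo (2 * m) c := ⟨hr.1, lt_trans hr.2 hb2⟩
    have hne : r - 2 * m ≠ 0 := by have := hr.1; intro hz; linarith [sub_eq_zero.mp hz]
    have hlog : HasDerivAt (fun t : ℝ => Real.log (t - 2 * m)) ((r - 2 * m)⁻¹) r := by
      have := ((hasDerivAt_id r).sub_const (2 * m)).log hne
      simpa using this
    exact (heq r hrc).add (hlog.const_mul (K / 2))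
  have hd_neg : ∀ x ∈ Set.Ioo (2 * m) b,
      -(lam ^ 2) * x ^ 3 * u x + K / 2 < 0 ∧ 0 < x - 2 * m := by
    intro x hx
    have hx1 := hx.1
    have hd : 0 < x - 2 * m := by linarith
    have hu : a / 2 < u x := hub x hx
    have hcube : (2 * m) ^ 3 ≤ x ^ 3 :=
      pow_le_pow_left₀ (by linarith) (le_of_lt hx1) 3
    have hx0 : 0 < x := by linarith
    have hpx : 0 < lam ^ 2 * x ^ 3 := by positivity
    have hKle : K ≤ lam ^ 2 * x ^ 3 * u x := by
      rw [hK]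
      have h1 : lam ^ 2 * (2 * m) ^ 3 * (a / 2) ≤ lam ^ 2 * x ^ 3 * (a / 2) :=
        mul_le_mul_of_nonneg_right
          (mul_le_mul_of_nonneg_left hcube (sq_nonneg lam)) (by linarith)
      have h2 : lam ^ 2 * x ^ 3 * (a / 2) ≤ lam ^ 2 * x ^ 3 * u x :=
        mul_le_mul_of_nonneg_left (le_of_lt hu) (le_of_lt hpx)
      linarith
    exact ⟨by linarith, hd⟩
  have hanti : StrictAntiOn h (Set.Ioo (2 * m) b) := by
    apply strictAntiOn_of_deriv_neg (convex_Ioo _ _)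
    · exact fun x hx => (hderivh x hx).continuousAt.continuousWithinAt
    · rw [interior_Ioo]
      intro x hx
      rw [(hderivh x hx).deriv]
      obtain ⟨hnum, hd⟩ := hd_neg x hx
      have heqv : -(lam ^ 2) * x ^ 3 * u x / (x - 2 * m) + K / 2 * (x - 2 * m)⁻¹
          = (-(lam ^ 2) * x ^ 3 * u x + K / 2) / (x - 2 * m) := by
        field_simp
      rw [heqv]
      exact div_neg_of_neg_of_pos hnum hd
  -- fixed point b0
  set b0 : ℝ := (2 * m + b) / 2 with hb0
  have hb0mem : b0 ∈ Set.Ioo (2 * m) b := ⟨by simp [hb0]; linarith, by simp [hb0]; linarith⟩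
  have hM0 : 0 ≤ M := le_trans (abs_nonneg _) (hbdd b0 ⟨hb0mem.1, lt_trans hb0mem.2 hb2⟩)
  -- choose r close to 2m
  set L : ℝ := (h b0 - c ^ 2 * M - 1) * (2 / K) with hL
  set r : ℝ := 2 * m + min ((b0 - 2 * m) / 2) (Real.exp L) with hr
  have hd0 : 0 < b0 - 2 * m := by linarith [hb0mem.1]
  have hminpos : 0 < min ((b0 - 2 * m) / 2) (Real.exp L) :=
    lt_min (by linarith) (Real.exp_pos L)
  have hrmem : r ∈ Set.Ioo (2 * m) b0 := by
    rw [hr, Set.mem_Ioo]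
    have hle : min ((b0 - 2 * m) / 2) (Real.exp L) ≤ (b0 - 2 * m) / 2 := min_le_left _ _
    exact ⟨by linarith, by linarith⟩
  have hrmemb : r ∈ Set.Ioo (2 * m) b := ⟨hrmem.1, lt_trans hrmem.2 hb0mem.2⟩
  have hgt := hanti hrmemb hb0mem hrmem.2  -- h b0 < h r
  -- bound h r
  have hrc : r ∈ Set.Ioo (2 * m) c := ⟨hrmemb.1, lt_trans hrmemb.2 hb2⟩
  have hgb : (r ^ 2 - 2 * m * r) * u' r ≤ c ^ 2 * M := by
    have h1 : |(r ^ 2 - 2 * m * r) * u' r| ≤ c ^ 2 * M := by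
      rw [abs_mul]
      apply mul_le_mul _ (hbdd r hrc) (abs_nonneg _) (by positivity)
      rw [abs_of_nonneg (by nlinarith [hrc.1, hrc.2, hm] : (0:ℝ) ≤ r ^ 2 - 2 * m * r)]
      nlinarith [hrc.1, hrc.2, hm]
    linarith [le_abs_self ((r ^ 2 - 2 * m * r) * u' r)]
  have hlogb : Real.log (r - 2 * m) ≤ L := by
    have hrsub : r - 2 * m = min ((b0 - 2 * m) / 2) (Real.exp L) := by rw [hr]; ring
    rw [hrsub, Real.log_le_iff_le_exp hminpos]
    exact min_le_right _ _
  have hKL : K / 2 * L = h b0 - c ^ 2 * M - 1 := by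
    rw [hL]; field_simp
  have hhr : h r ≤ h b0 - 1 := by
    have h2 : K / 2 * Real.log (r - 2 * m) ≤ K / 2 * L :=
      mul_le_mul_of_nonneg_left hlogb (by linarith)
    rw [hKL] at h2
    have h3 : h r = (r ^ 2 - 2 * m * r) * u' r + K / 2 * Real.log (r - 2 * m) := rfl
    clear_value a b K h b0 L r
    rw [h3]
    linarith only [hgb, h2]
  linarith

/-- A solution of the radial Schwarzschild eigenvalue equation
`(r²(1-2m/r)u')' + λ² r² (1-2m/r)⁻¹ u = 0` on `(2m, c)` which is continuous on `[2m, c)`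
with bounded derivative must vanish at the horizon `r = 2m`. -/
theorem stmt12 (m lam c : ℝ) (hm : 0 < m) (hlam : 0 < lam) (hc : 2 * m < c)
    (u u' : ℝ → ℝ) (hcont : ContinuousOn u (Set.Ico (2 * m) c))
    (hderiv : ∀ r ∈ Set.Ioo (2 * m) c, HasDerivAt u (u' r) r)
    (M : ℝ) (hbdd : ∀ r ∈ Set.Ioo (2 * m) c, |u' r| ≤ M)
    (heq : ∀ r ∈ Set.Ioo (2 * m) c,
      HasDerivAt (fun t : ℝ => (t ^ 2 - 2 * m * t) * u' t)
        (-(lam ^ 2) * r ^ 3 * u r / (r - 2 * m)) r) :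
    u (2 * m) = 0 := by
  by_contra hne
  rcases lt_or_gt_of_ne hne with hlt | hgt
  · -- apply aux to -u
    apply stmt12_aux m lam c hm hlam hc (fun t => -u t) (fun t => -u' t) hcont.neg M
    · intro r hr; simpa using hbdd r hr
    · intro r hr
      have := (heq r hr).neg
      simp only [Pi.neg_def] at this
      have hfun : (fun t : ℝ => -((t ^ 2 - 2 * m * t) * u' t))
          = fun t : ℝ => (t ^ 2 - 2 * m * t) * (-u' t) := by funext t; ring
      have hval : -(-(lam ^ 2) * r ^ 3 * u r / (r - 2 * m))
          = -(lam ^ 2) * r ^ 3 * (-u r) / (r - 2 * m) := by ring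
      rw [hfun, hval] at this
      exact this
    · simpa using hlt
  · exact stmt12_aux m lam c hm hlam hc u u' hcont M hbdd heq hgt
end
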